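/- Let G be a connected d-regular graph on 2n vertices with adjacency matrix A, and let λ be the second largest eigenvalue of A. If S is a nonempty set of vertices such that every vertex of S has at least γ neighbors within S, then |S| ≥ 2n(γ - λ)/(d - λ). -/

import Mathlib

open Finset Matrix SimpleGraph

section aux
variable {V : Type*} [Fintype V] [DecidableEq V]

lemma mulVec_sum' (A : Matrix V V ℝ) (f : V → V → ℝ) :
    A *ᵥ (∑ i, f i) = ∑ i, A *ᵥ f i := by
  simp only [← Matrix.mulVecLin_apply]
  exact map_sum _ _ _

lemma dotProduct_sum' (x : V → ℝ) (f : V → V → ℝ) :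
    x ⬝ᵥ (∑ i, f i) = ∑ i, x ⬝ᵥ f i := by
  simp only [dotProduct, Finset.sum_apply, Finset.mul_sum]
  exact Finset.sum_comm

lemma quad_bound (G : SimpleGraph V) [DecidableRel G.Adj]
    (d : ℕ) (hreg : G.IsRegularOfDegree d) (hconn : G.Connected)
    (lam : ℝ)
    (hlam : ∀ μ : ℝ, Module.End.HasEigenvalue
        (Matrix.toLin' (G.adjMatrix ℝ)) μ → μ = d ∨ μ ≤ lam)
    (x : V → ℝ) (hx : ∑ v, x v = 0) :
    x ⬝ᵥ (G.adjMatrix ℝ *ᵥ x) ≤ lam * (x ⬝ᵥ x) := by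
  classical
  have hA : (G.adjMatrix ℝ).IsHermitian := by
    ext i j
    simp [Matrix.conjTranspose_apply, SimpleGraph.adj_comm]
  set b := hA.eigenvectorBasis with hb
  set μ := hA.eigenvalues with hμ
  set xE : EuclideanSpace ℝ V := WithLp.toLp 2 x with hxE
  have hrepr : ∑ i, b.repr xE i • b i = xE := b.sum_repr xE
  set c : V → ℝ := fun i => b.repr xE i with hc
  have hxfun : x = ∑ i, c i • (b i : V → ℝ) := by
    have := congrArg (fun y : EuclideanSpace ℝ V => (y : V → ℝ)) hrepr
    simpa using this.symm
  have hdot_b : ∀ i, x ⬝ᵥ (b i : V → ℝ) = c i := by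
    intro i
    have : c i = inner ℝ (b i) xE := b.repr_apply_apply xE i
    rw [this]
    simp [hxE, PiLp.inner_apply, dotProduct, mul_comm]
  have hAx : G.adjMatrix ℝ *ᵥ x = ∑ i, (c i * μ i) • (b i : V → ℝ) := by
    conv_lhs => rw [hxfun]
    rw [show (∑ i, c i • (b i : V → ℝ)) = ∑ i, (fun i => c i • (b i : V → ℝ)) i from rfl,
      mulVec_sum']
    refine Finset.sum_congr rfl fun i _ => ?_
    have hev : G.adjMatrix ℝ *ᵥ (b i : V → ℝ) = μ i • (b i : V → ℝ) :=
      hA.mulVec_eigenvectorBasis i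
    rw [mulVec_smul, hev, smul_smul]
  have hquad : x ⬝ᵥ (G.adjMatrix ℝ *ᵥ x) = ∑ i, μ i * c i ^ 2 := by
    rw [hAx, dotProduct_sum']
    refine Finset.sum_congr rfl fun i _ => ?_
    rw [dotProduct_smul, smul_eq_mul, hdot_b]
    ring
  have hnorm : x ⬝ᵥ x = ∑ i, c i ^ 2 := by
    nth_rewrite 2 [hxfun]
    rw [dotProduct_sum']
    refine Finset.sum_congr rfl fun i _ => ?_
    rw [dotProduct_smul, smul_eq_mul, hdot_b]
    ring
  rw [hquad, hnorm, Finset.mul_sum]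
  refine Finset.sum_le_sum fun i _ => ?_
  -- each eigenvalue is d or ≤ lam
  have hev : G.adjMatrix ℝ *ᵥ (b i : V → ℝ) = μ i • (b i : V → ℝ) :=
    hA.mulVec_eigenvectorBasis i
  have hbne : (b i : V → ℝ) ≠ 0 := by
    intro h0
    have := b.orthonormal.ne_zero i
    apply this
    ext v
    exact congrFun h0 v
  have heig : Module.End.HasEigenvalue (Matrix.toLin' (G.adjMatrix ℝ)) (μ i) := by
    apply Module.End.hasEigenvalue_of_hasEigenvector (x := (b i : V → ℝ))
    exact ⟨Module.End.mem_eigenspace_iff.2 ((Matrix.toLin'_apply _ _).trans hev), hbne⟩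
  rcases hlam (μ i) heig with hd | hle
  · -- eigenvalue d: eigenvector is constant, so c i = 0
    have hlap : Matrix.toLin' (G.lapMatrix ℝ) (b i : V → ℝ) = 0 := by
      rw [Matrix.toLin'_apply]
      ext v
      rw [lapMatrix_mulVec_apply]
      have h1 : (G.adjMatrix ℝ *ᵥ (b i : V → ℝ)) v = ∑ u ∈ G.neighborFinset v, (b i : V → ℝ) u :=
        adjMatrix_mulVec_apply _ _ _
      have h2 : ∑ u ∈ G.neighborFinset v, (b i : V → ℝ) u = μ i * (b i : V → ℝ) v := by
        have h3 := congrFun hev v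
        rw [h1] at h3
        simpa using h3
      rw [h2, hreg v, hd]
      simp
    have hconst := (G.lapMatrix_mulVec_eq_zero_iff_forall_reachable
      (x := (b i : V → ℝ))).1 (by rwa [Matrix.toLin'_apply] at hlap)
    have hcz : c i = 0 := by
      rw [← hdot_b i]
      obtain ⟨v0⟩ := hconn.nonempty
      have hval : ∀ v, (b i : V → ℝ) v = (b i : V → ℝ) v0 := fun v =>
        hconst v v0 (hconn.preconnected v v0)
      calc x ⬝ᵥ (b i : V → ℝ) = ∑ v, x v * (b i : V → ℝ) v0 := by
            refine Finset.sum_congr rfl fun v _ => by rw [hval v]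
        _ = (∑ v, x v) * (b i : V → ℝ) v0 := by rw [Finset.sum_mul]
        _ = 0 := by rw [hx]; ring
    rw [hcz]
    simp
  · exact mul_le_mul_of_nonneg_right hle (sq_nonneg _)
end aux

/-- Let G be a connected d-regular graph on 2n vertices, and let λ < d bound
all eigenvalues of the adjacency matrix other than d (the second largest
eigenvalue). If S is a nonempty set of vertices in which every vertex has at
least γ neighbors inside S, then |S| ≥ 2n(γ - λ)/(d - λ). -/
theorem expander_min_subgraph_size
    (V : Type*) [Fintype V] [DecidableEq V]
    (n : ℕ) (hV : Fintype.card V = 2 * n)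
    (G : SimpleGraph V) [DecidableRel G.Adj]
    (d : ℕ) (hreg : G.IsRegularOfDegree d)
    (hconn : G.Connected)
    (lam : ℝ) (hlam_lt : lam < d)
    (hlam : ∀ μ : ℝ, Module.End.HasEigenvalue
        (Matrix.toLin' (G.adjMatrix ℝ)) μ → μ = d ∨ μ ≤ lam)
    (γ : ℝ) (S : Finset V) (hS : S.Nonempty)
    (hdeg : ∀ v ∈ S, γ ≤ ((S.filter (fun u => G.Adj v u)).card : ℝ)) :
    2 * n * (γ - lam) / (d - lam) ≤ (S.card : ℝ) := by
  classical
  set A := G.adjMatrix ℝ with hA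
  set N : ℝ := 2 * n with hNdef
  set s : ℝ := (S.card : ℝ) with hsdef
  have hs : 0 < s := by
    have : 0 < S.card := Finset.card_pos.2 hS
    rw [hsdef]
    exact_mod_cast this
  have hN : 0 < N := by
    have : Nonempty V := ⟨hS.choose⟩
    have h1 : 0 < Fintype.card V := Fintype.card_pos
    rw [hV] at h1
    have : (0:ℝ) < ((2*n : ℕ) : ℝ) := by exact_mod_cast h1
    simpa [hNdef] using this
  set α : ℝ := s / N with hα
  have e1 : α * N = s := div_mul_cancel₀ s hN.ne'
  set e : V → ℝ := fun v => if v ∈ S then 1 else 0 with he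
  set o : V → ℝ := fun _ => 1 with ho
  set x : V → ℝ := fun v => e v - α with hxdef
  have hxeo : x = e - α • o := by
    ext v; simp [hxdef, he, ho]
  have he_sum : ∑ v, e v = s := by
    simp [he, Finset.sum_ite_mem, hsdef]
  have hcard : ((Fintype.card V : ℕ) : ℝ) = N := by
    rw [hV]; push_cast [hNdef]; ring
  have hsum : ∑ v, x v = 0 := by
    simp only [hxdef, Finset.sum_sub_distrib, he_sum, Finset.sum_const,
      Finset.card_univ, nsmul_eq_mul]
    rw [hcard]
    rw [mul_comm] at e1
    linarith [e1]
  -- basic dot products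
  have heo : e ⬝ᵥ o = s := by
    simpa [dotProduct, ho] using he_sum
  have hoo : o ⬝ᵥ o = N := by
    simp [dotProduct, ho, Finset.card_univ, hcard]
  have hoe : o ⬝ᵥ e = s := by
    rw [dotProduct_comm]; exact heo
  have hee : e ⬝ᵥ e = s := by
    have : ∀ v, e v * e v = e v := by
      intro v; by_cases hv : v ∈ S <;> simp [he, hv]
    simp only [dotProduct, this, he_sum]
  -- A acting on o
  have hAo : A *ᵥ o = (d : ℝ) • o := by
    ext v
    rw [hA, adjMatrix_mulVec_apply]
    simp only [ho, Pi.smul_apply, smul_eq_mul, mul_one, Finset.sum_const, nsmul_eq_mul]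
    rw [G.card_neighborFinset_eq_degree, hreg v]
  -- A acting on e
  have hAe : ∀ v, (A *ᵥ e) v = ((S.filter (fun u => G.Adj v u)).card : ℝ) := by
    intro v
    rw [hA, adjMatrix_mulVec_apply]
    have h2 : ∑ u ∈ G.neighborFinset v, e u
        = ((G.neighborFinset v ∩ S).card : ℝ) := by
      simp [he, Finset.sum_ite_mem]
    rw [h2]
    congr 2
    ext u
    simp [SimpleGraph.mem_neighborFinset, and_comm]
  -- symmetry of the quadratic form
  have hsym : ∀ u w : V → ℝ, u ⬝ᵥ (A *ᵥ w) = w ⬝ᵥ (A *ᵥ u) := by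
    intro u w
    rw [Matrix.dotProduct_mulVec]
    have hAsymm : Aᵀ = A := G.isSymm_adjMatrix
    rw [show u ᵥ* A = A *ᵥ u from by rw [← hAsymm, Matrix.vecMul_transpose, hAsymm]]
    exact dotProduct_comm _ _
  -- quadratic form values
  have heAo : e ⬝ᵥ (A *ᵥ o) = d * s := by
    rw [hAo, dotProduct_smul, heo, smul_eq_mul]
  have hoAe : o ⬝ᵥ (A *ᵥ e) = d * s := by rw [hsym]; exact heAo
  have hoAo : o ⬝ᵥ (A *ᵥ o) = d * N := by
    rw [hAo, dotProduct_smul, hoo, smul_eq_mul]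
  have heAe : γ * s ≤ e ⬝ᵥ (A *ᵥ e) := by
    have step : e ⬝ᵥ (A *ᵥ e) = ∑ v ∈ S, (A *ᵥ e) v := by
      rw [dotProduct]
      simp only [he, ite_mul, one_mul, zero_mul, Finset.sum_ite_mem, Finset.univ_inter]
    have hbound : ∑ v ∈ S, γ ≤ ∑ v ∈ S, (A *ᵥ e) v :=
      Finset.sum_le_sum fun v hv => by rw [hAe v]; exact hdeg v hv
    rw [step]
    calc γ * s = ∑ v ∈ S, γ := by
          rw [Finset.sum_const, nsmul_eq_mul, hsdef]; ring
      _ ≤ _ := hbound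
  -- apply the spectral bound
  have hkey := quad_bound G d hreg hconn lam hlam x hsum
  rw [← hA] at hkey
  have hAx : A *ᵥ x = A *ᵥ e - α • ((d:ℝ) • o) := by
    rw [hxeo, Matrix.mulVec_sub, Matrix.mulVec_smul, hAo]
  have hxAx : x ⬝ᵥ (A *ᵥ x) = (e ⬝ᵥ (A *ᵥ e)) - 2*α*d*s + α ^ 2 * N * d := by
    rw [hAx, hxeo]
    simp only [sub_dotProduct, dotProduct_sub, smul_dotProduct,
      dotProduct_smul, smul_eq_mul, hoAe, heAo, heo, hoe, hoo]
    ring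
  have hxx : x ⬝ᵥ x = s - 2*α*s + α ^ 2 * N := by
    rw [hxeo]
    simp only [sub_dotProduct, dotProduct_sub, smul_dotProduct,
      dotProduct_smul, smul_eq_mul, hee, heo, hoe, hoo]
    ring
  have e2 : α ^ 2 * N = α * s := by rw [sq, mul_assoc, e1]
  rw [hxAx, hxx, e2] at hkey
  have main : γ*s - 2*α*d*s + α*s*d ≤ lam*(s - 2*α*s + α*s) :=
    le_trans (by linarith [heAe]) hkey
  have h2 : γ - lam ≤ α*(d-lam) := by nlinarith [main, hs]
  have hdl : (0:ℝ) < (d:ℝ) - lam := by linarith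
  rw [div_le_iff₀ hdl]
  have h3 : N*(γ-lam) ≤ N*(α*(d-lam)) := mul_le_mul_of_nonneg_left h2 hN.le
  have e3 : N*(α*(d-lam)) = s*((d:ℝ)-lam) := by rw [← e1]; ring
  calc 2 * (n:ℝ) * (γ - lam) = N * (γ - lam) := by rw [hNdef]
    _ ≤ N*(α*(d-lam)) := h3
    _ = s*((d:ℝ)-lam) := e3
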